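/- arXiv:math/9301212 — 3 statements merged into one kernel-verified Lean document; each statement's English description precedes it below -/
import Mathlib

section
/- The energy of a round circle of any radius r > 0 in R^3 equals 4. Specifically, for γ(u) = (r cos(u/r), r sin(u/r), 0), u ∈ [0, 2πr], one has ∬ (1/|γ(u)-γ(v)|^2 - 1/D(γ(u),γ(v))^2) du dv = 4. -/
open Real intervalIntegral

/-- The round circle of radius `r` in ℝ³, parameterized by arc length. -/
noncomputable def circleCurve (r : ℝ) (u : ℝ) : EuclideanSpace ℝ (Fin 3) :=
  WithLp.toLp 2 ![r * Real.cos (u / r), r * Real.sin (u / r), 0]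

/-- The energy integrand as a function of the difference `t = u - v`. -/
noncomputable def gg (r t : ℝ) : ℝ :=
  1 / (4 * r ^ 2 * Real.sin (t / (2 * r)) ^ 2) - 1 / (min |t| (2 * π * r - |t|)) ^ 2

/-- An antiderivative of `gg` on `(0, πr)`. -/
noncomputable def FF (r t : ℝ) : ℝ :=
  1 / t - Real.cos (t / (2 * r)) / (2 * r * Real.sin (t / (2 * r)))

lemma norm_circleCurve_sub (r : ℝ) (hr : 0 < r) (u v : ℝ) :
    ‖circleCurve r u - circleCurve r v‖ ^ 2 = 4 * r ^ 2 * Real.sin ((u - v) / (2 * r)) ^ 2 := by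
  have h : ‖circleCurve r u - circleCurve r v‖ ^ 2
      = (r * Real.cos (u/r) - r * Real.cos (v/r)) ^ 2
        + (r * Real.sin (u/r) - r * Real.sin (v/r)) ^ 2 := by
    rw [EuclideanSpace.norm_eq]
    rw [Real.sq_sqrt (by positivity)]
    simp [circleCurve, Fin.sum_univ_three, sq_abs]
  rw [h]
  have h2 : (u - v) / (2 * r) = (u/r - v/r) / 2 := by rw [← sub_div, div_div, mul_comm]
  have h5 : 2 * ((u/r - v/r) / 2) = u/r - v/r := by ring
  rw [h2, Real.sin_sq_eq_half_sub, h5, Real.cos_sub]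
  have h3 := Real.sin_sq_add_cos_sq (u/r)
  have h4 := Real.sin_sq_add_cos_sq (v/r)
  nlinarith [h3, h4]

lemma integrand_eq (r : ℝ) (hr : 0 < r) (u v : ℝ) :
    1 / ‖circleCurve r u - circleCurve r v‖ ^ 2
      - 1 / (min |u - v| (2 * π * r - |u - v|)) ^ 2 = gg r (u - v) := by
  rw [norm_circleCurve_sub r hr, gg]

lemma FF_tendsto_zero (r : ℝ) (hr : 0 < r) :
    Filter.Tendsto (FF r) (nhdsWithin 0 (Set.Ioi 0)) (nhds 0) := by
  have hmem : Set.Ioo (0:ℝ) r ∈ nhdsWithin (0:ℝ) (Set.Ioi 0) :=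
    Ioo_mem_nhdsGT_of_mem ⟨le_refl 0, hr⟩
  have key : ∀ t ∈ Set.Ioo (0:ℝ) r,
      0 ≤ FF r t ∧ FF r t ≤ t / (3 * r ^ 2) := by
    intro t ht
    set x : ℝ := t / (2 * r) with hx_def
    have hx : 0 < x := div_pos ht.1 (by positivity)
    have hx2 : x ≤ 1 / 2 := by
      rw [hx_def, div_le_div_iff₀ (by positivity) (by norm_num)]
      nlinarith [ht.2]
    have hxlt : x < π / 2 := lt_of_le_of_lt hx2 (by nlinarith [Real.pi_gt_three])
    have hcpos : 0 < Real.cos x := Real.cos_pos_of_mem_Ioo ⟨by linarith, hxlt⟩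
    have hs : 0 < Real.sin x := Real.sin_pos_of_pos_of_lt_pi hx (by nlinarith [Real.pi_gt_three])
    have hxc : x * Real.cos x ≤ Real.sin x := by
      have := Real.lt_tan hx hxlt
      rw [Real.tan_eq_sin_div_cos, lt_div_iff₀ hcpos] at this
      linarith
    have hsle : Real.sin x ≤ x := Real.sin_le hx.le
    have hcge : 1 - x ^ 2 / 2 ≤ Real.cos x := Real.one_sub_sq_div_two_le_cos
    have ht' : t = 2 * r * x := by rw [hx_def]; field_simp
    have hkey : FF r t = (Real.sin x - x * Real.cos x) / (2 * r * x * Real.sin x) := by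
      rw [FF, ← hx_def, ht']
      field_simp
    constructor
    · rw [hkey]
      apply div_nonneg (by linarith) (by positivity)
    · rw [hkey, div_le_div_iff₀ (by positivity) (by positivity)]
      have hkey2 : 3 * (Real.sin x - x * Real.cos x) ≤ 4 * x ^ 2 * Real.sin x := by
        nlinarith [mul_le_mul_of_nonneg_left hcge (by positivity : (0:ℝ) ≤ 4 * x ^ 3),
          mul_le_mul_of_nonneg_left hcge (by positivity : (0:ℝ) ≤ 3 * x), sq_nonneg x,
          mul_le_mul_of_nonneg_left hxc (by positivity : (0:ℝ) ≤ 4 * x ^ 2)]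
      rw [ht']
      nlinarith [mul_le_mul_of_nonneg_left hkey2 (sq_nonneg r)]
  apply tendsto_of_tendsto_of_tendsto_of_le_of_le'
    (g := fun _ : ℝ => (0:ℝ)) (h := fun t : ℝ => t / (3 * r ^ 2))
  · exact tendsto_const_nhds
  · have : Filter.Tendsto (fun t : ℝ => t / (3 * r ^ 2)) (nhds 0) (nhds 0) := by
      have h0 := (continuous_id.div_const (3 * r ^ 2)).tendsto (0:ℝ)
      simpa using h0
    exact this.mono_left nhdsWithin_le_nhds
  · exact Filter.eventually_of_mem hmem fun t ht => (key t ht).1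
  · exact Filter.eventually_of_mem hmem fun t ht => (key t ht).2

lemma sin_div_pos (r : ℝ) (hr : 0 < r) {t : ℝ} (h0 : 0 < t) (h1 : t ≤ π * r) :
    0 < Real.sin (t / (2 * r)) := by
  apply Real.sin_pos_of_pos_of_lt_pi (div_pos h0 (by positivity))
  rw [div_lt_iff₀ (by positivity)]
  nlinarith [Real.pi_pos]

lemma FF_continuousOn (r : ℝ) (hr : 0 < r) :
    ContinuousOn (FF r) (Set.Icc 0 (π * r)) := by
  intro t ht
  rcases eq_or_lt_of_le ht.1 with h0 | h0
  · subst h0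
    have h0 : ContinuousWithinAt (FF r) (Set.Ioi 0) 0 := by
      have hT := FF_tendsto_zero r hr
      have hv : FF r 0 = 0 := by simp [FF]
      rw [ContinuousWithinAt, hv]
      exact hT
    rw [continuousWithinAt_Ioi_iff_Ici] at h0
    exact h0.mono Set.Icc_subset_Ici_self
  · have hs := sin_div_pos r hr h0 ht.2
    apply ContinuousAt.continuousWithinAt
    apply ContinuousAt.sub
    · exact (continuousAt_const.div continuousAt_id h0.ne')
    · apply ContinuousAt.div
      · exact (Real.continuous_cos.comp (continuous_id.div_const (2 * r))).continuousAt
      · exact ((continuous_const.mul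
          (Real.continuous_sin.comp (continuous_id.div_const (2 * r)))).continuousAt)
      · positivity

lemma FF_hasDerivAt (r : ℝ) (hr : 0 < r) {t : ℝ} (ht : t ∈ Set.Ioo 0 (π * r)) :
    HasDerivAt (FF r) (gg r t) t := by
  have hs := sin_div_pos r hr ht.1 ht.2.le
  set x : ℝ := t / (2 * r) with hx_def
  have hden : 2 * r * Real.sin x ≠ 0 := by positivity
  have h1 : HasDerivAt (fun t : ℝ => t / (2 * r)) (1 / (2 * r)) t := by
    simpa using (hasDerivAt_id t).div_const (2 * r)
  have hcos : HasDerivAt (fun t : ℝ => Real.cos (t / (2 * r)))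
      (-Real.sin x * (1 / (2 * r))) t := by
    have := (Real.hasDerivAt_cos x).comp t h1; exact this
  have hsin : HasDerivAt (fun t : ℝ => 2 * r * Real.sin (t / (2 * r)))
      (2 * r * (Real.cos x * (1 / (2 * r)))) t :=
    ((Real.hasDerivAt_sin x).comp t h1).const_mul (2 * r)
  have hfrac := hcos.div hsin hden
  have hinv : HasDerivAt (fun t : ℝ => 1 / t) (-(1 / t ^ 2)) t := by
    simpa [one_div] using hasDerivAt_inv ht.1.ne'
  have htot := hinv.sub hfrac
  have htot' : HasDerivAt (FF r) _ t := htot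
  convert htot' using 1
  have habs : |t| = t := abs_of_pos ht.1
  have hmin : min t (2 * π * r - t) = t := min_eq_left (by nlinarith [ht.2])
  rw [gg, habs, hmin]
  have hsc := Real.sin_sq_add_cos_sq x
  rw [show t / (2 * r) = x from rfl]
  have e1 : -Real.sin x * (1 / (2 * r)) * (2 * r * Real.sin x)
      - Real.cos x * (2 * r * (Real.cos x * (1 / (2 * r)))) = -1 := by
    field_simp
    linear_combination (-1 : ℝ) * hsc
  rw [e1]
  have e2 : (2 * r * Real.sin x) ^ 2 = 4 * r ^ 2 * Real.sin x ^ 2 := by ring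
  rw [e2]
  ring

lemma gg_nonneg (r : ℝ) (hr : 0 < r) {t : ℝ} (ht : t ∈ Set.Ioo 0 (π * r)) :
    0 ≤ gg r t := by
  have habs : |t| = t := abs_of_pos ht.1
  have hmin : min t (2 * π * r - t) = t := min_eq_left (by nlinarith [ht.2])
  rw [gg, habs, hmin, sub_nonneg]
  set x : ℝ := t / (2 * r) with hx_def
  have hx : 0 < x := div_pos ht.1 (by positivity)
  have hs : 0 < Real.sin x := by
    apply Real.sin_pos_of_pos_of_lt_pi hx
    rw [hx_def, div_lt_iff₀ (by positivity)]
    nlinarith [ht.2, Real.pi_pos]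
  have hsle : Real.sin x ≤ x := Real.sin_le hx.le
  have ht' : t = 2 * r * x := by rw [hx_def]; field_simp
  apply one_div_le_one_div_of_le (by positivity)
  have h2 : Real.sin x ^ 2 ≤ x ^ 2 := by nlinarith
  rw [ht']
  nlinarith [mul_le_mul_of_nonneg_left h2 (by positivity : (0:ℝ) ≤ 4 * r ^ 2)]

lemma gg_intervalIntegrable_half (r : ℝ) (hr : 0 < r) :
    IntervalIntegrable (gg r) MeasureTheory.volume 0 (π * r) := by
  have hab : (0:ℝ) ≤ π * r := by positivity
  apply intervalIntegrable_deriv_of_nonneg (g := FF r)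
  · rw [Set.uIcc_of_le hab]; exact FF_continuousOn r hr
  · rw [min_eq_left hab, max_eq_right hab]; exact fun x hx => FF_hasDerivAt r hr hx
  · rw [min_eq_left hab, max_eq_right hab]; exact fun x hx => gg_nonneg r hr hx

lemma gg_integral_half (r : ℝ) (hr : 0 < r) :
    ∫ t in (0:ℝ)..(π * r), gg r t = 1 / (π * r) := by
  have hab : (0:ℝ) ≤ π * r := by positivity
  rw [integral_eq_sub_of_hasDeriv_right_of_le hab (FF_continuousOn r hr)
      (fun x hx => (FF_hasDerivAt r hr hx).hasDerivWithinAt)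
      (gg_intervalIntegrable_half r hr)]
  have h1 : FF r (π * r) = 1 / (π * r) := by
    have : π * r / (2 * r) = π / 2 := by field_simp
    simp [FF, this, Real.cos_pi_div_two]
  have h2 : FF r 0 = 0 := by simp [FF]
  rw [h1, h2, sub_zero]

lemma gg_even (r t : ℝ) : gg r (-t) = gg r t := by
  simp [gg, abs_neg, neg_div, Real.sin_neg]

lemma gg_refl (r : ℝ) (hr : 0 < r) {t : ℝ} (ht : t ∈ Set.Icc 0 (2 * π * r)) :
    gg r (2 * π * r - t) = gg r t := by
  have h1 : |2 * π * r - t| = 2 * π * r - t := abs_of_nonneg (by linarith [ht.2])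
  have h2 : |t| = t := abs_of_nonneg ht.1
  have h3 : (2 * π * r - t) / (2 * r) = π - t / (2 * r) := by field_simp
  rw [gg, gg, h1, h2, h3, Real.sin_pi_sub]
  have h4 : 2 * π * r - (2 * π * r - t) = t := by ring
  rw [h4, min_comm]

lemma gg_shift (r : ℝ) (hr : 0 < r) {t : ℝ} (ht : t ∈ Set.Icc 0 (2 * π * r)) :
    gg r (t - 2 * π * r) = gg r t := by
  rw [show t - 2 * π * r = -(2 * π * r - t) by ring, gg_even, gg_refl r hr ht]

lemma gg_intervalIntegrable_I2 (r : ℝ) (hr : 0 < r) :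
    IntervalIntegrable (gg r) MeasureTheory.volume (π * r) (2 * π * r) := by
  have h := (gg_intervalIntegrable_half r hr).comp_sub_left (2 * π * r)
  have h2 : (2 * π * r - 0) = 2 * π * r := by ring
  have h3 : 2 * π * r - π * r = π * r := by ring
  rw [h2, h3] at h
  have h4 : IntervalIntegrable (gg r) MeasureTheory.volume (2 * π * r) (π * r) := by
    rw [intervalIntegrable_iff] at h ⊢
    have hple : π * r ≤ 2 * π * r := by nlinarith [Real.pi_pos]
    apply h.congr_fun ?_ measurableSet_uIoc
    intro x hx
    rw [Set.uIoc_of_ge hple] at hx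
    have hx0 : (0:ℝ) ≤ x := le_trans (by positivity) hx.1.le
    exact gg_refl r hr ⟨hx0, hx.2⟩
  exact h4.symm

lemma gg_intervalIntegrable_full (r : ℝ) (hr : 0 < r) :
    IntervalIntegrable (gg r) MeasureTheory.volume (-(2 * π * r)) (2 * π * r) := by
  have I0L := (gg_intervalIntegrable_half r hr).trans (gg_intervalIntegrable_I2 r hr)
  have Ineg : IntervalIntegrable (gg r) MeasureTheory.volume (-(2 * π * r)) 0 := by
    have h := (IntervalIntegrable.iff_comp_neg (f := gg r) (a := 0) (b := 2 * π * r)).mp I0L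
    have h2 : (fun x : ℝ => gg r (-x)) = gg r := funext fun x => gg_even r x
    rw [h2] at h
    simpa using h.symm
  exact Ineg.trans I0L

lemma gg_integral_full (r : ℝ) (hr : 0 < r) :
    ∫ t in (0:ℝ)..(2 * π * r), gg r t = 2 / (π * r) := by
  have hB : ∫ t in (π * r)..(2 * π * r), gg r t = 1 / (π * r) := by
    have h := intervalIntegral.integral_comp_sub_left (a := (0:ℝ)) (b := π * r) (gg r) (2 * π * r)
    have h2 : (2 * π * r - 0) = 2 * π * r := by ring
    have h3 : 2 * π * r - π * r = π * r := by ring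
    rw [h2, h3] at h
    rw [← h]
    rw [intervalIntegral.integral_congr (g := gg r) ?_]
    · exact gg_integral_half r hr
    · intro x hx
      rw [Set.uIcc_of_le (by positivity : (0:ℝ) ≤ π * r)] at hx
      exact gg_refl r hr ⟨hx.1, by nlinarith [hx.2, Real.pi_pos]⟩
  rw [← intervalIntegral.integral_add_adjacent_intervals
      (gg_intervalIntegrable_half r hr) (gg_intervalIntegrable_I2 r hr),
    gg_integral_half r hr, hB]
  ring

lemma inner_integral (r : ℝ) (hr : 0 < r) {u : ℝ} (hu : u ∈ Set.Icc 0 (2 * π * r)) :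
    ∫ v in (0:ℝ)..(2 * π * r), gg r (u - v) = 2 / (π * r) := by
  have hL : (0:ℝ) ≤ 2 * π * r := by positivity
  have Iful := gg_intervalIntegrable_full r hr
  have hsub1 : IntervalIntegrable (gg r) MeasureTheory.volume 0 u :=
    Iful.mono_set (by
      rw [Set.uIcc_of_le hu.1, Set.uIcc_of_le (by linarith : -(2 * π * r) ≤ 2 * π * r)]
      exact Set.Icc_subset_Icc (by linarith) hu.2)
  have hsub2 : IntervalIntegrable (gg r) MeasureTheory.volume u (2 * π * r) :=
    Iful.mono_set (by
      rw [Set.uIcc_of_le hu.2, Set.uIcc_of_le (by linarith : -(2 * π * r) ≤ 2 * π * r)]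
      exact Set.Icc_subset_Icc (by linarith [hu.1]) le_rfl)
  have h := intervalIntegral.integral_comp_sub_left (a := (0:ℝ)) (b := 2 * π * r) (gg r) u
  rw [sub_zero] at h
  rw [h]
  have hshift : ∫ x in (u - 2 * π * r)..0, gg r x = ∫ x in u..(2 * π * r), gg r x := by
    have h2 := intervalIntegral.integral_comp_sub_right (a := u) (b := 2 * π * r) (gg r) (2 * π * r)
    rw [sub_self] at h2
    rw [← h2]
    apply intervalIntegral.integral_congr
    intro x hx
    rw [Set.uIcc_of_le hu.2] at hx
    exact gg_shift r hr ⟨le_trans hu.1 hx.1, hx.2⟩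
  have hsplitL : IntervalIntegrable (gg r) MeasureTheory.volume (u - 2 * π * r) 0 :=
    Iful.mono_set (by
      rw [Set.uIcc_of_le (by linarith [hu.2] : u - 2 * π * r ≤ 0),
        Set.uIcc_of_le (by linarith : -(2 * π * r) ≤ 2 * π * r)]
      exact Set.Icc_subset_Icc (by linarith [hu.1]) hL)
  rw [← intervalIntegral.integral_add_adjacent_intervals hsplitL hsub1, hshift]
  rw [add_comm, intervalIntegral.integral_add_adjacent_intervals hsub1 hsub2]
  exact gg_integral_full r hr

/-- The energy of a round circle of radius `r` equals 4. -/
theorem energy_circle_eq_four (r : ℝ) (hr : 0 < r) :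
    (∫ u in (0:ℝ)..(2 * π * r), ∫ v in (0:ℝ)..(2 * π * r),
      (1 / ‖circleCurve r u - circleCurve r v‖ ^ 2
        - 1 / (min |u - v| (2 * π * r - |u - v|)) ^ 2)) = 4 := by
  have hL : (0:ℝ) ≤ 2 * π * r := by positivity
  have h1 : ∀ u ∈ Set.uIcc (0:ℝ) (2 * π * r),
      (∫ v in (0:ℝ)..(2 * π * r),
        (1 / ‖circleCurve r u - circleCurve r v‖ ^ 2
          - 1 / (min |u - v| (2 * π * r - |u - v|)) ^ 2)) = 2 / (π * r) := by
    intro u hu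
    rw [Set.uIcc_of_le hL] at hu
    simp_rw [integrand_eq r hr]
    exact inner_integral r hr hu
  rw [intervalIntegral.integral_congr h1, intervalIntegral.integral_const, smul_eq_mul]
  field_simp
  ring
end

section
/- Let f : R -> R be Lipschitz with constant C and f(u) ≥ m > 0 for all u. Define ε_+ = ∫_u^{u+ε} f(w) dw. Then for all sufficiently small ε > 0, |1/ε_+ - 1/(f(u)ε) + (1/f(u)^2)∫_0^1 (1-t) f'(u + εt) dt| ≤ K·ε for a constant K depending only on C and m. -/
open intervalIntegral Filter MeasureTheory Set Topology

private lemma abs_deriv_le_of_lip {C : NNReal} {f : ℝ → ℝ} (hf : LipschitzWith C f) (x : ℝ) :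
    |deriv f x| ≤ C := by
  by_cases h : DifferentiableAt ℝ f x
  · have h1 : ‖fderiv ℝ f x‖ ≤ C := norm_fderiv_le_of_lipschitz ℝ hf
    have h2 : deriv f x = fderiv ℝ f x 1 := by rw [fderiv_apply_one_eq_deriv]
    calc |deriv f x| = ‖fderiv ℝ f x 1‖ := by rw [h2]; rfl
      _ ≤ ‖fderiv ℝ f x‖ * ‖(1:ℝ)‖ := (fderiv ℝ f x).le_opNorm 1
      _ ≤ C := by simpa using h1
  · rw [deriv_zero_of_not_differentiableAt h]; simpa using C.coe_nonneg

private lemma tendsto_slope_seq {F : ℝ → ℝ} {d y : ℝ} (H : HasDerivAt F d y) :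
    Tendsto (fun n : ℕ => (((n:ℝ)+1)⁻¹)⁻¹ * (F (y + ((n:ℝ)+1)⁻¹) - F y)) atTop (𝓝 d) := by
  have hδ : Tendsto (fun n : ℕ => ((n:ℝ)+1)⁻¹) atTop (𝓝 0) := by
    simpa [one_div] using (tendsto_one_div_add_atTop_nhds_zero_nat : Tendsto (fun n : ℕ => 1 / ((n:ℝ) + 1)) atTop (𝓝 0))
  have h1 : Tendsto (fun n : ℕ => y + ((n:ℝ)+1)⁻¹) atTop (𝓝[≠] y) := by
    refine tendsto_nhdsWithin_of_tendsto_nhds_of_eventually_within _ ?_ ?_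
    · simpa using tendsto_const_nhds.add hδ
    · filter_upwards with n
      have : ((n:ℝ)+1)⁻¹ ≠ 0 := by positivity
      simp [this]
  have := (hasDerivAt_iff_tendsto_slope.1 H).comp h1
  refine this.congr fun n => ?_
  have hne : ((n:ℝ)+1)⁻¹ ≠ 0 := by positivity
  have hyy : y + ((n:ℝ)+1)⁻¹ - y = ((n:ℝ)+1)⁻¹ := by ring
  simp only [Function.comp_apply, slope_def_field, hyy, inv_inv, div_eq_inv_mul, inv_inv]

private lemma weighted_ftc {C : NNReal} {f : ℝ → ℝ} (hf : LipschitzWith C f)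
    (u v : ℝ) (huv : u ≤ v) :
    ∫ w in u..v, (v - w) * deriv f w = (∫ w in u..v, f w) - f u * (v - u) := by
  set δ : ℕ → ℝ := fun n => ((n:ℝ)+1)⁻¹ with hδdef
  have hδpos : ∀ n, 0 < δ n := fun n => by positivity
  have hcf : Continuous f := hf.continuous
  -- primitives
  set Φ : ℝ → ℝ := fun y => ∫ s in u..y, (v - s) * f s with hΦdef
  set Ψ : ℝ → ℝ := fun y => ∫ s in u..y, f s with hΨdef
  have hcΦint : Continuous (fun s => (v - s) * f s) := by continuity
  have hΦ : ∀ y, HasDerivAt Φ ((v - y) * f y) y := fun y =>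
    (hcΦint.integral_hasStrictDerivAt u y).hasDerivAt
  have hΨ : ∀ y, HasDerivAt Ψ (f y) y := fun y =>
    (hcf.integral_hasStrictDerivAt u y).hasDerivAt
  -- the difference quotient integrands
  set g : ℕ → ℝ → ℝ := fun n w => (v - w) * ((δ n)⁻¹ * (f (w + δ n) - f w)) with hgdef
  -- Step A: dominated convergence
  have hA : Tendsto (fun n => ∫ w in u..v, g n w) atTop
      (𝓝 (∫ w in u..v, (v - w) * deriv f w)) := by
    apply intervalIntegral.tendsto_integral_filter_of_dominated_convergence (fun _ => (v - u) * C)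
    · filter_upwards with n
      exact (by continuity : Continuous (g n)).aestronglyMeasurable
    · filter_upwards with n
      filter_upwards with x hx
      rw [Set.uIoc_of_le huv] at hx
      have h1 : |f (x + δ n) - f x| ≤ C * δ n := by
        have := hf.dist_le_mul (x + δ n) x
        simpa [Real.dist_eq, abs_of_pos (hδpos n)] using this
      have h2 : |v - x| ≤ v - u := by
        rw [abs_of_nonneg (by linarith [hx.2])]
        linarith [hx.1]
      have hδn := hδpos n
      calc ‖g n x‖ = |v - x| * ((δ n)⁻¹ * |f (x + δ n) - f x|) := by
            simp only [hgdef, Real.norm_eq_abs, abs_mul, abs_inv, abs_of_pos hδn]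
        _ ≤ (v - u) * ((δ n)⁻¹ * (C * δ n)) := by
            have hb : (δ n)⁻¹ * |f (x + δ n) - f x| ≤ (δ n)⁻¹ * (C * δ n) :=
              mul_le_mul_of_nonneg_left h1 (by positivity)
            exact mul_le_mul h2 hb (by positivity) (by linarith [hx.1, hx.2])
        _ = (v - u) * C := by field_simp
    · exact intervalIntegrable_const
    · filter_upwards [hf.ae_differentiableAt_of_real (μ := MeasureTheory.volume)] with x hx _
      have H : HasDerivAt f (deriv f x) x := hx.hasDerivAt
      have := (tendsto_const_nhds (x := v - x)).mul (tendsto_slope_seq H)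
      exact this.congr fun n => by simp [hgdef, hδdef]
  -- Step B: explicit computation of the integrals
  have hB : ∀ n, ∫ w in u..v, g n w
      = (δ n)⁻¹ * (Φ (v + δ n) - Φ v) - (δ n)⁻¹ * (Φ (u + δ n) - Φ u)
        + (Ψ (v + δ n) - Ψ (u + δ n)) := by
    intro n
    have hδn := hδpos n
    have hint1 : ∀ a b : ℝ, IntervalIntegrable (fun w => (v - w) * f (w + δ n))
        MeasureTheory.volume a b := fun a b => (by continuity : Continuous _).intervalIntegrable a b
    have hint2 : ∀ a b : ℝ, IntervalIntegrable (fun w => (v - w) * f w)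
        MeasureTheory.volume a b := fun a b => hcΦint.intervalIntegrable a b
    have hint3 : ∀ a b : ℝ, IntervalIntegrable f MeasureTheory.volume a b :=
      fun a b => hcf.intervalIntegrable a b
    have e1 : ∫ w in u..v, g n w
        = (δ n)⁻¹ * ((∫ w in u..v, (v - w) * f (w + δ n)) - ∫ w in u..v, (v - w) * f w) := by
      rw [← integral_sub (hint1 u v) (hint2 u v), ← intervalIntegral.integral_const_mul]
      apply integral_congr
      intro x _
      simp [hgdef]; ring
    have e2 : (∫ w in u..v, (v - w) * f (w + δ n))
        = ∫ s in (u + δ n)..(v + δ n), (v + δ n - s) * f s := by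
      rw [← integral_comp_add_right (fun s => (v + δ n - s) * f s) (δ n)]
      apply integral_congr
      intro x _
      ring_nf
    have e3 : (∫ s in (u + δ n)..(v + δ n), (v + δ n - s) * f s)
        = (Φ (v + δ n) - Φ (u + δ n)) + δ n * (Ψ (v + δ n) - Ψ (u + δ n)) := by
      have e3a : (∫ s in (u + δ n)..(v + δ n), (v + δ n - s) * f s)
          = (∫ s in (u + δ n)..(v + δ n), (v - s) * f s)
            + ∫ s in (u + δ n)..(v + δ n), δ n * f s := by
        rw [← integral_add (hint2 _ _) ((hint3 _ _).const_mul _)]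
        apply integral_congr; intro x _; ring
      rw [e3a, intervalIntegral.integral_const_mul]
      have c1 : (∫ s in (u + δ n)..(v + δ n), (v - s) * f s) = Φ (v + δ n) - Φ (u + δ n) := by
        rw [hΦdef]
        exact (integral_interval_sub_left (hint2 _ _) (hint2 _ _)).symm
      have c2 : (∫ s in (u + δ n)..(v + δ n), f s) = Ψ (v + δ n) - Ψ (u + δ n) := by
        rw [hΨdef]
        exact (integral_interval_sub_left (hint3 _ _) (hint3 _ _)).symm
      rw [c1, c2]
    have e4 : Φ v = ∫ w in u..v, (v - w) * f w := rfl
    have e5 : Φ u = 0 := integral_same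
    rw [e1, e2, e3, ← e4, e5]
    field_simp
    ring
  -- Step C: limit of the explicit formula
  have hC : Tendsto (fun n => (δ n)⁻¹ * (Φ (v + δ n) - Φ v) - (δ n)⁻¹ * (Φ (u + δ n) - Φ u)
        + (Ψ (v + δ n) - Ψ (u + δ n))) atTop
      (𝓝 (((v - v) * f v) - ((v - u) * f u) + (Ψ v - Ψ u))) := by
    have t1 : Tendsto (fun n => (δ n)⁻¹ * (Φ (v + δ n) - Φ v)) atTop (𝓝 ((v - v) * f v)) :=
      tendsto_slope_seq (hΦ v)
    have t2 : Tendsto (fun n => (δ n)⁻¹ * (Φ (u + δ n) - Φ u)) atTop (𝓝 ((v - u) * f u)) :=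
      tendsto_slope_seq (hΦ u)
    have hδ0 : Tendsto (fun n : ℕ => δ n) atTop (𝓝 0) := by
      simpa [hδdef, one_div] using (tendsto_one_div_add_atTop_nhds_zero_nat : Tendsto (fun n : ℕ => 1 / ((n:ℝ) + 1)) atTop (𝓝 0))
    have hΨc : Continuous Ψ := by
      rw [continuous_iff_continuousAt]; exact fun y => (hΨ y).continuousAt
    have t3 : Tendsto (fun n => Ψ (v + δ n)) atTop (𝓝 (Ψ v)) := by
      have : Tendsto (fun n : ℕ => v + δ n) atTop (𝓝 v) := by
        simpa using tendsto_const_nhds.add hδ0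
      exact (hΨc.continuousAt.tendsto.comp this)
    have t4 : Tendsto (fun n => Ψ (u + δ n)) atTop (𝓝 (Ψ u)) := by
      have : Tendsto (fun n : ℕ => u + δ n) atTop (𝓝 u) := by
        simpa using tendsto_const_nhds.add hδ0
      exact (hΨc.continuousAt.tendsto.comp this)
    exact (t1.sub t2).add (t3.sub t4)
  have hA' : Tendsto (fun n => ∫ w in u..v, g n w) atTop
      (𝓝 (((v - v) * f v) - ((v - u) * f u) + (Ψ v - Ψ u))) := by
    refine hC.congr fun n => (hB n).symm
  have := tendsto_nhds_unique hA hA'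
  have hΨu : Ψ u = 0 := integral_same
  rw [this, hΨu, hΨdef]
  ring


/-- Asymptotic expansion of `1/ε₊` where `ε₊ = ∫_u^{u+ε} f`, for a Lipschitz `f ≥ m > 0`,
with error constant `K` depending only on the Lipschitz constant `C` and `m`. -/
theorem inv_eps_plus_expansion (C : NNReal) (m : ℝ) (hm : 0 < m) :
    ∃ K : ℝ, ∀ f : ℝ → ℝ, LipschitzWith C f → (∀ u, m ≤ f u) → ∀ u : ℝ,
      ∃ ε₀ > 0, ∀ ε : ℝ, 0 < ε → ε < ε₀ →
        |1 / (∫ w in u..(u + ε), f w) - 1 / (f u * ε)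
          + (1 / (f u) ^ 2) * ∫ t in (0:ℝ)..1, (1 - t) * deriv f (u + ε * t)| ≤ K * ε := by
  refine ⟨(C:ℝ)^2 / m^3, fun f hf hmf u => ⟨1, one_pos, fun ε hε _ => ?_⟩⟩
  have hcf : Continuous f := hf.continuous
  have hεne : ε ≠ 0 := ne_of_gt hε
  set F := f u with hFdef
  have hFpos : 0 < F := lt_of_lt_of_le hm (hmf u)
  set J := ∫ t in (0:ℝ)..1, (1 - t) * deriv f (u + ε * t) with hJdef
  set P := ∫ w in u..(u + ε), f w with hPdef
  -- substitution t ↦ u + ε t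
  have hsub : J = ε⁻¹ * (ε⁻¹ * ∫ w in u..(u + ε), (u + ε - w) * deriv f w) := by
    have h1 : J = ∫ t in (0:ℝ)..1, (fun w => ε⁻¹ * ((u + ε - w) * deriv f w)) (ε * t + u) := by
      rw [hJdef]
      apply integral_congr
      intro t _
      show (1 - t) * deriv f (u + ε * t) = ε⁻¹ * ((u + ε - (ε * t + u)) * deriv f (ε * t + u))
      rw [show ε * t + u = u + ε * t by ring]
      field_simp
      ring
    have h2 := integral_comp_mul_add (a := (0:ℝ)) (b := 1)
      (fun w => ε⁻¹ * ((u + ε - w) * deriv f w)) hεne u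
    rw [h1, h2, show ε * 0 + u = u by ring, show ε * 1 + u = u + ε by ring,
      smul_eq_mul, intervalIntegral.integral_const_mul]
  have hw := weighted_ftc hf u (u + ε) (by linarith)
  have hkey : P = F * ε + ε ^ 2 * J := by
    rw [hsub, hw, ← hPdef, ← hFdef, show u + ε - u = ε by ring]
    field_simp
    ring
  -- bounds
  have hJb : |J| ≤ (C : ℝ) := by
    have hb : ∀ x ∈ Set.uIoc (0:ℝ) 1, ‖(1 - x) * deriv f (u + ε * x)‖ ≤ (C : ℝ) := by
      intro x hx
      rw [Set.uIoc_of_le (by norm_num : (0:ℝ) ≤ 1)] at hx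
      have h1 : |1 - x| ≤ 1 := by
        rw [abs_of_nonneg (by linarith [hx.2])]; linarith [hx.1]
      calc ‖(1 - x) * deriv f (u + ε * x)‖ = |1 - x| * |deriv f (u + ε * x)| := abs_mul _ _
        _ ≤ 1 * (C : ℝ) := mul_le_mul h1 (abs_deriv_le_of_lip hf _) (abs_nonneg _) one_pos.le
        _ = (C : ℝ) := one_mul _
    have := intervalIntegral.norm_integral_le_of_norm_le_const hb
    simpa [hJdef] using this
  have hPm : m * ε ≤ P := by
    have h1 : ∫ _ in u..(u + ε), m ≤ P :=
      integral_mono_on (by linarith) intervalIntegrable_const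
        (hcf.intervalIntegrable _ _) (fun x _ => hmf x)
    have h2 : (∫ _ in u..(u + ε), m) = ε * m := by
      rw [intervalIntegral.integral_const, smul_eq_mul]; ring_nf
    rw [h2] at h1
    linarith
  have hPpos : 0 < P := lt_of_lt_of_le (by positivity) hPm
  have hPne : P ≠ 0 := ne_of_gt hPpos
  have hFne : F ≠ 0 := ne_of_gt hFpos
  have h0 : F * ε + ε ^ 2 * J ≠ 0 := by rw [← hkey]; exact hPne
  have hiden : 1 / P - 1 / (F * ε) + 1 / F ^ 2 * J = ε ^ 2 * J ^ 2 / (F ^ 2 * P) := by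
    rw [hkey]
    have h0' : F + ε * J ≠ 0 := by
      intro h; apply h0; rw [show F * ε + ε ^ 2 * J = ε * (F + ε * J) by ring, h, mul_zero]
    field_simp
    ring
  rw [hiden, abs_of_nonneg (by positivity)]
  have hstep : ε ^ 2 * J ^ 2 / (F ^ 2 * P) ≤ ε ^ 2 * (C:ℝ) ^ 2 / (m ^ 2 * (m * ε)) := by
    apply div_le_div₀ (by positivity) ?_ (by positivity) ?_
    · have hJ2 : J ^ 2 ≤ (C : ℝ) ^ 2 := by nlinarith [abs_nonneg J, neg_abs_le J, le_abs_self J]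
      exact mul_le_mul_of_nonneg_left hJ2 (by positivity)
    · have h1 : m ^ 2 ≤ F ^ 2 := by nlinarith [hmf u]
      exact mul_le_mul h1 hPm (by positivity) (by positivity)
  refine hstep.trans (le_of_eq ?_)
  field_simp
end

section
/- If f : R/lZ -> R is Lipschitz and bounded below by m > 0, then ∫_{R/lZ} (1/f(u)) [∫_0^1 (1-t)(f'(u + εt) - f'(u - εt)) dt] du → 0 as ε → 0. -/
open intervalIntegral Filter MeasureTheory Set

/-- The key cancellation: for a Lipschitz `f ≥ m > 0` on ℝ/lℤ,
`∫ (1/f(u)) ∫₀¹ (1-t)(f'(u+εt) - f'(u-εt)) dt du → 0` as `ε → 0⁺`. -/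
theorem cancellation_limit (l : ℝ) (hl : 0 < l) (C : NNReal) (m : ℝ) (hm : 0 < m)
    (f : ℝ → ℝ) (hper : Function.Periodic f l) (hlip : LipschitzWith C f)
    (hmf : ∀ u, m ≤ f u) :
    Tendsto (fun ε : ℝ => ∫ u in (0:ℝ)..l, (1 / f u) *
        ∫ t in (0:ℝ)..1, (1 - t) * (deriv f (u + ε * t) - deriv f (u - ε * t)))
      (nhdsWithin 0 (Set.Ioi 0)) (nhds 0) := by
  set g : ℝ → ℝ := deriv f with hgdef
  have hC : ∀ x, |g x| ≤ (C : ℝ) := fun x => by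
    simpa [Real.norm_eq_abs] using norm_deriv_le_of_lipschitz hlip (x₀ := x)
  have hgmeas : Measurable g := measurable_deriv f
  have hgper : Function.Periodic g l := by
    intro x
    have hf' : (fun y => f (y + l)) = f := funext hper
    calc g (x + l) = deriv (fun y => f (y + l)) x := (deriv_comp_add_const f l x).symm
      _ = g x := by rw [hf']
  have hfc : Continuous f := hlip.continuous
  have hfm : Measurable f := hfc.measurable
  have hfpos : ∀ x, 0 < f x := fun x => lt_of_lt_of_le hm (hmf x)
  have hm2 : (0:ℝ) < m ^ 2 := by positivity
  have hCnn : (0:ℝ) ≤ C := C.coe_nonneg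
  -- bound on reciprocal differences
  have hinv : ∀ a b : ℝ, |1 / f a - 1 / f b| ≤ (C : ℝ) * |a - b| / m ^ 2 := by
    intro a b
    have h1 : 1 / f a - 1 / f b = (f b - f a) / (f a * f b) := by
      field_simp [(hfpos a).ne', (hfpos b).ne']
    rw [h1, abs_div]
    have hfb : |f b - f a| ≤ (C : ℝ) * |a - b| := by
      have := hlip.dist_le_mul b a
      rw [Real.dist_eq, Real.dist_eq] at this
      simpa [abs_sub_comm] using this
    have hprod : m ^ 2 ≤ |f a * f b| := by
      rw [abs_of_pos (mul_pos (hfpos a) (hfpos b))]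
      calc m ^ 2 = m * m := sq m
        _ ≤ f a * f b := mul_le_mul (hmf a) (hmf b) hm.le (hfpos a).le
    exact div_le_div₀ (by positivity) hfb hm2 hprod
  -- bound on 1/f
  have hinvf : ∀ y : ℝ, |1 / f y| ≤ 1 / m := by
    intro y
    rw [abs_of_pos (one_div_pos.2 (hfpos y))]
    exact one_div_le_one_div_of_le hm (hmf y)
  -- generic bound on products
  have hbnd : ∀ x y : ℝ, |g x * (1 / f y)| ≤ (C : ℝ) * (1 / m) := by
    intro x y
    rw [abs_mul]
    exact mul_le_mul (hC x) (hinvf y) (abs_nonneg _) hCnn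
  -- interval integrability of bounded measurable functions
  have hII : ∀ (h : ℝ → ℝ), Measurable h → ∀ (M : ℝ), (∀ x, |h x| ≤ M) →
      ∀ a b : ℝ, IntervalIntegrable h volume a b := by
    intro h hmeas M hM a b
    rw [intervalIntegrable_iff]
    have hfin : volume (Set.uIoc a b) < ⊤ := measure_Ioc_lt_top
    refine Integrable.mono' (g := fun _ => M) (integrableOn_const hfin.ne)
      hmeas.aestronglyMeasurable ?_
    exact Filter.Eventually.of_forall fun x => by
      simpa [Real.norm_eq_abs] using hM x
  -- the translated integrands: measurability, bound, periodicity
  have hGenMeas : ∀ c : ℝ, Measurable (fun v => g v * (1 / f (v - c))) := by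
    intro c
    exact hgmeas.mul (measurable_const.div (hfm.comp (measurable_id.sub measurable_const)))
  have hGenPer : ∀ c : ℝ, Function.Periodic (fun v => g v * (1 / f (v - c))) l := by
    intro c v
    simp only
    rw [hgper v, show v + l - c = (v - c) + l from by ring, hper (v - c)]
  -- Claim A: change of variables / cancellation identity
  have claimA : ∀ s : ℝ,
      (∫ u in (0:ℝ)..l, (g (u + s) - g (u - s)) * (1 / f u)) =
        ∫ v in (0:ℝ)..l, g v * (1 / f (v - s) - 1 / f (v + s)) := by
    intro s
    have hInt1 : IntervalIntegrable (fun u => g (u + s) * (1 / f u)) volume 0 l :=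
      hII _ ((hgmeas.comp (measurable_id.add_const s)).mul (measurable_const.div hfm))
        ((C : ℝ) * (1 / m)) (fun x => hbnd _ _) 0 l
    have hInt2 : IntervalIntegrable (fun u => g (u - s) * (1 / f u)) volume 0 l :=
      hII _ ((hgmeas.comp (measurable_id.sub_const s)).mul (measurable_const.div hfm))
        ((C : ℝ) * (1 / m)) (fun x => hbnd _ _) 0 l
    have hInt3 : IntervalIntegrable (fun v => g v * (1 / f (v - s))) volume 0 l :=
      hII _ (hGenMeas s) ((C : ℝ) * (1 / m)) (fun x => hbnd _ _) 0 l
    have hInt4 : IntervalIntegrable (fun v => g v * (1 / f (v + s))) volume 0 l :=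
      hII _ (hgmeas.mul (measurable_const.div (hfm.comp (measurable_id.add_const s))))
        ((C : ℝ) * (1 / m)) (fun x => hbnd _ _) 0 l
    have h1 : (∫ u in (0:ℝ)..l, g (u + s) * (1 / f u)) =
        ∫ v in (0:ℝ)..l, g v * (1 / f (v - s)) := by
      have e1 : (∫ u in (0:ℝ)..l, g (u + s) * (1 / f u)) =
          ∫ u in (0:ℝ)..l, (fun v => g v * (1 / f (v - s))) (u + s) := by
        simp only [add_sub_cancel_right]
      rw [e1, intervalIntegral.integral_comp_add_right (fun v => g v * (1 / f (v - s))) s]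
      have h0 := (hGenPer s).intervalIntegral_add_eq s 0
      rw [zero_add] at h0
      rw [zero_add, add_comm l s]
      exact h0
    have h2 : (∫ u in (0:ℝ)..l, g (u - s) * (1 / f u)) =
        ∫ v in (0:ℝ)..l, g v * (1 / f (v + s)) := by
      have e2 : (∫ u in (0:ℝ)..l, g (u - s) * (1 / f u)) =
          ∫ u in (0:ℝ)..l, (fun v => g v * (1 / f (v - (-s)))) (u - s) := by
        simp only [sub_neg_eq_add, sub_add_cancel]
      rw [e2, intervalIntegral.integral_comp_sub_right (fun v => g v * (1 / f (v - -s))) s]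
      have h0 := (hGenPer (-s)).intervalIntegral_add_eq (-s) 0
      rw [zero_add] at h0
      rw [zero_sub, show l - s = -s + l from by ring]
      simpa [sub_neg_eq_add] using h0
    calc (∫ u in (0:ℝ)..l, (g (u + s) - g (u - s)) * (1 / f u))
        = ∫ u in (0:ℝ)..l, (g (u + s) * (1 / f u) - g (u - s) * (1 / f u)) := by
          simp only [sub_mul]
      _ = (∫ u in (0:ℝ)..l, g (u + s) * (1 / f u))
            - ∫ u in (0:ℝ)..l, g (u - s) * (1 / f u) :=
          intervalIntegral.integral_sub hInt1 hInt2
      _ = (∫ v in (0:ℝ)..l, g v * (1 / f (v - s)))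
            - ∫ v in (0:ℝ)..l, g v * (1 / f (v + s)) := by rw [h1, h2]
      _ = ∫ v in (0:ℝ)..l, (g v * (1 / f (v - s)) - g v * (1 / f (v + s))) :=
          (intervalIntegral.integral_sub hInt3 hInt4).symm
      _ = ∫ v in (0:ℝ)..l, g v * (1 / f (v - s) - 1 / f (v + s)) := by
          simp only [mul_sub]
  -- Claim B: bound on the cancelled integral
  have claimB : ∀ s : ℝ,
      |∫ v in (0:ℝ)..l, g v * (1 / f (v - s) - 1 / f (v + s))|
        ≤ 2 * (C : ℝ) * (C : ℝ) / m ^ 2 * |s| * l := by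
    intro s
    have hpt : ∀ x ∈ Set.uIoc (0:ℝ) l,
        ‖g x * (1 / f (x - s) - 1 / f (x + s))‖ ≤ 2 * (C : ℝ) * (C : ℝ) / m ^ 2 * |s| := by
      intro x _
      rw [Real.norm_eq_abs, abs_mul]
      have h2 : |1 / f (x - s) - 1 / f (x + s)| ≤ (C : ℝ) * |2 * s| / m ^ 2 := by
        have := hinv (x - s) (x + s)
        rwa [show x - s - (x + s) = -(2 * s) from by ring, abs_neg] at this
      calc |g x| * |1 / f (x - s) - 1 / f (x + s)|
          ≤ (C : ℝ) * ((C : ℝ) * |2 * s| / m ^ 2) :=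
            mul_le_mul (hC x) h2 (abs_nonneg _) hCnn
        _ = 2 * (C : ℝ) * (C : ℝ) / m ^ 2 * |s| := by
            rw [abs_mul, abs_two]; ring
    have := intervalIntegral.norm_integral_le_of_norm_le_const hpt
    rw [Real.norm_eq_abs] at this
    calc |∫ v in (0:ℝ)..l, g v * (1 / f (v - s) - 1 / f (v + s))|
        ≤ 2 * (C : ℝ) * (C : ℝ) / m ^ 2 * |s| * |l - 0| := this
      _ = 2 * (C : ℝ) * (C : ℝ) / m ^ 2 * |s| * l := by
          rw [sub_zero, abs_of_pos hl]
  -- finite measure instances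
  haveI hfin1 : IsFiniteMeasure (volume.restrict (Set.Ioc (0:ℝ) l)) :=
    ⟨by rw [Measure.restrict_apply_univ]; exact measure_Ioc_lt_top⟩
  haveI hfin2 : IsFiniteMeasure (volume.restrict (Set.Ioc (0:ℝ) 1)) :=
    ⟨by rw [Measure.restrict_apply_univ]; exact measure_Ioc_lt_top⟩
  -- the Fubini step for each ε
  have key : ∀ ε : ℝ,
      (∫ u in (0:ℝ)..l, (1 / f u) *
          ∫ t in (0:ℝ)..1, (1 - t) * (g (u + ε * t) - g (u - ε * t)))
        = ∫ t in Set.Ioc (0:ℝ) 1,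
            (1 - t) * ∫ v in (0:ℝ)..l, g v * (1 / f (v - ε * t) - 1 / f (v + ε * t)) := by
    intro ε
    have hFmeas : Measurable (fun p : ℝ × ℝ =>
        (1 / f p.1) * ((1 - p.2) * (g (p.1 + ε * p.2) - g (p.1 - ε * p.2)))) := by
      refine Measurable.mul (measurable_const.div (hfm.comp measurable_fst)) ?_
      refine Measurable.mul (measurable_const.sub measurable_snd) ?_
      exact (hgmeas.comp (measurable_fst.add (measurable_snd.const_mul ε))).sub
        (hgmeas.comp (measurable_fst.sub (measurable_snd.const_mul ε)))
    have hFint : Integrable (Function.uncurry (fun u t =>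
        (1 / f u) * ((1 - t) * (g (u + ε * t) - g (u - ε * t)))))
        ((volume.restrict (Set.Ioc (0:ℝ) l)).prod (volume.restrict (Set.Ioc (0:ℝ) 1))) := by
      refine Integrable.mono' (g := fun _ => (1 / m) * (1 * (2 * (C : ℝ))))
        (integrable_const _) hFmeas.aestronglyMeasurable ?_
      rw [Measure.prod_restrict, ae_restrict_iff' (measurableSet_Ioc.prod measurableSet_Ioc)]
      refine Filter.Eventually.of_forall fun p hp => ?_
      have ht : p.2 ∈ Set.Ioc (0:ℝ) 1 := hp.2
      have h1t : |1 - p.2| ≤ 1 := by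
        rw [abs_le]; constructor <;> linarith [ht.1, ht.2]
      have hgg : |g (p.1 + ε * p.2) - g (p.1 - ε * p.2)| ≤ 2 * (C : ℝ) := by
        calc |g (p.1 + ε * p.2) - g (p.1 - ε * p.2)|
            ≤ |g (p.1 + ε * p.2)| + |g (p.1 - ε * p.2)| := abs_sub _ _
          _ ≤ (C : ℝ) + (C : ℝ) := add_le_add (hC _) (hC _)
          _ = 2 * (C : ℝ) := by ring
      rw [Function.uncurry, Real.norm_eq_abs, abs_mul, abs_mul]
      refine mul_le_mul (hinvf p.1) ?_ (by positivity) (by positivity)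
      exact mul_le_mul h1t hgg (abs_nonneg _) zero_le_one
    calc (∫ u in (0:ℝ)..l, (1 / f u) *
            ∫ t in (0:ℝ)..1, (1 - t) * (g (u + ε * t) - g (u - ε * t)))
        = ∫ u in Set.Ioc (0:ℝ) l, ∫ t in Set.Ioc (0:ℝ) 1,
            (1 / f u) * ((1 - t) * (g (u + ε * t) - g (u - ε * t))) := by
          rw [intervalIntegral.integral_of_le hl.le]
          refine integral_congr_ae (Filter.Eventually.of_forall fun u => ?_)
          show (1 / f u * ∫ t in (0:ℝ)..1, (1 - t) * (g (u + ε * t) - g (u - ε * t)))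
              = ∫ t in Set.Ioc (0:ℝ) 1, 1 / f u * ((1 - t) * (g (u + ε * t) - g (u - ε * t)))
          rw [intervalIntegral.integral_of_le zero_le_one, ← MeasureTheory.integral_const_mul]
      _ = ∫ t in Set.Ioc (0:ℝ) 1, ∫ u in Set.Ioc (0:ℝ) l,
            (1 / f u) * ((1 - t) * (g (u + ε * t) - g (u - ε * t))) :=
          integral_integral_swap hFint
      _ = ∫ t in Set.Ioc (0:ℝ) 1,
            (1 - t) * ∫ v in (0:ℝ)..l, g v * (1 / f (v - ε * t) - 1 / f (v + ε * t)) := by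
          refine integral_congr_ae (Filter.Eventually.of_forall fun t => ?_)
          show (∫ u in Set.Ioc (0:ℝ) l, 1 / f u * ((1 - t) * (g (u + ε * t) - g (u - ε * t))))
              = (1 - t) * ∫ v in (0:ℝ)..l, g v * (1 / f (v - ε * t) - 1 / f (v + ε * t))
          rw [← intervalIntegral.integral_of_le hl.le]
          have hre : ∀ u : ℝ, (1 / f u) * ((1 - t) * (g (u + ε * t) - g (u - ε * t)))
              = (1 - t) * ((g (u + ε * t) - g (u - ε * t)) * (1 / f u)) := fun u => by ring
          simp only [hre]
          rw [intervalIntegral.integral_const_mul, claimA (ε * t)]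
  -- final bound and squeeze
  have hsq : ∀ ε : ℝ,
      ‖∫ u in (0:ℝ)..l, (1 / f u) *
          ∫ t in (0:ℝ)..1, (1 - t) * (deriv f (u + ε * t) - deriv f (u - ε * t))‖
        ≤ 2 * (C : ℝ) * (C : ℝ) / m ^ 2 * l * |ε| := by
    intro ε
    rw [← hgdef, key ε, ← intervalIntegral.integral_of_le zero_le_one]
    have hpt : ∀ t ∈ Set.uIoc (0:ℝ) 1,
        ‖(1 - t) * ∫ v in (0:ℝ)..l, g v * (1 / f (v - ε * t) - 1 / f (v + ε * t))‖
          ≤ 2 * (C : ℝ) * (C : ℝ) / m ^ 2 * l * |ε| := by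
      intro t ht
      rw [Set.uIoc_of_le zero_le_one] at ht
      rw [Real.norm_eq_abs, abs_mul]
      have h1t : |1 - t| ≤ 1 := by
        rw [abs_le]; constructor <;> linarith [ht.1, ht.2]
      have hB := claimB (ε * t)
      have hts : |ε * t| ≤ |ε| := by
        rw [abs_mul]
        calc |ε| * |t| ≤ |ε| * 1 := by
              refine mul_le_mul_of_nonneg_left ?_ (abs_nonneg ε)
              rw [abs_le]; constructor <;> [linarith [ht.1]; linarith [ht.2]]
          _ = |ε| := mul_one _
      calc |1 - t| * |∫ v in (0:ℝ)..l, g v * (1 / f (v - ε * t) - 1 / f (v + ε * t))|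
          ≤ 1 * (2 * (C : ℝ) * (C : ℝ) / m ^ 2 * |ε * t| * l) :=
            mul_le_mul h1t hB (abs_nonneg _) zero_le_one
        _ ≤ 1 * (2 * (C : ℝ) * (C : ℝ) / m ^ 2 * |ε| * l) := by
            rw [one_mul, one_mul]
            refine mul_le_mul_of_nonneg_right ?_ hl.le
            exact mul_le_mul_of_nonneg_left hts (by positivity)
        _ = 2 * (C : ℝ) * (C : ℝ) / m ^ 2 * l * |ε| := by ring
    have := intervalIntegral.norm_integral_le_of_norm_le_const hpt
    simpa using this
  have htend : Tendsto (fun ε : ℝ => 2 * (C : ℝ) * (C : ℝ) / m ^ 2 * l * |ε|)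
      (nhdsWithin 0 (Set.Ioi 0)) (nhds 0) := by
    have h0 : Tendsto (fun ε : ℝ => 2 * (C : ℝ) * (C : ℝ) / m ^ 2 * l * |ε|)
        (nhds 0) (nhds (2 * (C : ℝ) * (C : ℝ) / m ^ 2 * l * |(0:ℝ)|)) :=
      (continuous_const.mul continuous_abs).tendsto 0
    simpa using h0.mono_left nhdsWithin_le_nhds
  exact squeeze_zero_norm hsq htend
end
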